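/- (Forward step method, strongly monotone case.) Let η ∈ ℝⁿ be a positive vector and let F : ℝⁿ → ℝⁿ be continuously differentiable with μ_{∞,η⁻¹}(−DF(x)) ≤ −c for all x ∈ ℝⁿ, where c > 0, and let d > 0 be a diagonal bound for F. Then F has a unique zero x*, and for every α ∈ (0, 1/d] the iteration x_{k+1} = x_k − αF(x_k) satisfies ‖x_{k+1} − x*‖_{∞,η⁻¹} ≤ (1 − αc) ‖x_k − x*‖_{∞,η⁻¹} for all k; consequently x_k → x* as k → ∞. -/

import Mathlib

open Filter

/-- Diagonally weighted ℓ∞ norm: ‖x‖_{∞,η⁻¹} = max_i |x_i|/η_i. -/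
noncomputable def wNorm {n : ℕ} (η x : Fin n → ℝ) : ℝ := ⨆ i, |x i| / η i

/-- Diagonally weighted ℓ∞ logarithmic norm of a matrix. -/
noncomputable def logNorm {n : ℕ} (η : Fin n → ℝ) (A : Matrix (Fin n) (Fin n) ℝ) : ℝ :=
  ⨆ i, (A i i + ∑ j ∈ Finset.univ.erase i, (η j / η i) * |A i j|)

/-- Jacobian matrix of `F` at `x`: (DF(x))_{ij} = ∂F_i/∂x_j. -/
noncomputable def jac {n : ℕ} (F : (Fin n → ℝ) → (Fin n → ℝ)) (x : Fin n → ℝ) :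
    Matrix (Fin n) (Fin n) ℝ :=
  fun i j => fderiv ℝ F x (Pi.single j 1) i

lemma le_wNorm {n : ℕ} (η x : Fin n → ℝ) (i : Fin n) : |x i| / η i ≤ wNorm η x := by
  exact le_ciSup (f := fun i => |x i| / η i) (Set.Finite.bddAbove (Set.finite_range _)) i

lemma wNorm_empty {n : ℕ} (hn : n = 0) (η x : Fin n → ℝ) : wNorm η x = 0 := by
  subst hn
  simp [wNorm, iSup, Set.range_eq_empty, Real.sSup_empty]

lemma wNorm_nonneg {n : ℕ} (η x : Fin n → ℝ) (hη : ∀ i, 0 < η i) : 0 ≤ wNorm η x := by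
  rcases isEmpty_or_nonempty (Fin n) with h | h
  · have hn : n = 0 := Nat.eq_zero_of_not_pos fun hp => h.elim ⟨0, hp⟩
    rw [wNorm_empty hn]
  · exact le_trans (div_nonneg (abs_nonneg _) (hη h.some).le) (le_wNorm η x h.some)

lemma clm_apply_eq_sum {n : ℕ} (L : (Fin n → ℝ) →L[ℝ] (Fin n → ℝ)) (v : Fin n → ℝ) (i : Fin n) :
    L v i = ∑ j, v j * L (Pi.single j 1) i := by
  have hv : v = ∑ j, v j • (Pi.single j 1 : Fin n → ℝ) := by
    funext k
    simp [Pi.single_apply, Finset.sum_apply, mul_ite]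
  conv_lhs => rw [hv]
  rw [map_sum]
  simp [Finset.sum_apply]

lemma row_bound {n : ℕ} (η : Fin n → ℝ) (hη : ∀ i, 0 < η i)
    (F : (Fin n → ℝ) → (Fin n → ℝ)) (c : ℝ)
    (hmono : ∀ x, logNorm η (-(jac F x)) ≤ -c) (z : Fin n → ℝ) (i : Fin n) :
    c ≤ jac F z i i ∧
      ∑ j ∈ Finset.univ.erase i, η j * |jac F z i j| ≤ (jac F z i i - c) * η i := by
  have h1 : (-(jac F z)) i i
      + ∑ j ∈ Finset.univ.erase i, (η j / η i) * |(-(jac F z)) i j| ≤ -c :=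
    le_trans (le_ciSup (f := fun i => (-(jac F z)) i i
      + ∑ j ∈ Finset.univ.erase i, (η j / η i) * |(-(jac F z)) i j|)
      (Set.Finite.bddAbove (Set.finite_range _)) i) (hmono z)
  have hrw : ∑ j ∈ Finset.univ.erase i, (η j / η i) * |(-(jac F z)) i j|
      = (∑ j ∈ Finset.univ.erase i, η j * |jac F z i j|) / η i := by
    rw [Finset.sum_div]
    refine Finset.sum_congr rfl fun j _ => ?_
    rw [Matrix.neg_apply, abs_neg, div_mul_eq_mul_div]
  rw [hrw, Matrix.neg_apply] at h1
  have hS : 0 ≤ ∑ j ∈ Finset.univ.erase i, η j * |jac F z i j| :=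
    Finset.sum_nonneg fun j _ => mul_nonneg (hη j).le (abs_nonneg _)
  have hSd : 0 ≤ (∑ j ∈ Finset.univ.erase i, η j * |jac F z i j|) / η i :=
    div_nonneg hS (hη i).le
  constructor
  · linarith
  · rw [← div_le_iff₀ (hη i)]
    linarith

noncomputable def prj {n : ℕ} (i : Fin n) : (Fin n → ℝ) →L[ℝ] ℝ :=
  ContinuousLinearMap.proj i

lemma prj_apply {n : ℕ} (i : Fin n) (v : Fin n → ℝ) : prj i v = v i := rfl

lemma key_contract {n : ℕ} (η : Fin n → ℝ) (hη : ∀ i, 0 < η i)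
    (F : (Fin n → ℝ) → (Fin n → ℝ)) (hF : ContDiff ℝ 1 F)
    (c : ℝ) (hmono : ∀ x, logNorm η (-(jac F x)) ≤ -c)
    (d : ℝ) (hd : 0 < d) (hdiag : ∀ x i, jac F x i i ≤ d)
    (α : ℝ) (hα0 : 0 < α) (hα1 : α ≤ 1 / d) (x y : Fin n → ℝ) :
    wNorm η ((x - α • F x) - (y - α • F y)) ≤ (1 - α * c) * wNorm η (x - y) := by
  rcases Nat.eq_zero_or_pos n with hn | hn
  · rw [wNorm_empty hn, wNorm_empty hn]; simp
  haveI : Nonempty (Fin n) := ⟨⟨0, hn⟩⟩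
  set W := wNorm η (x - y) with hWdef
  have hW : 0 ≤ W := wNorm_nonneg η _ hη
  have hb : ∀ j, |x j - y j| ≤ η j * W := by
    intro j
    have h := le_wNorm η (x - y) j
    rw [div_le_iff₀ (hη j)] at h
    simpa [mul_comm] using h
  have hFd : Differentiable ℝ F := hF.differentiable one_ne_zero
  have hαd : α * d ≤ 1 := by
    have := mul_le_mul_of_nonneg_right hα1 hd.le
    rwa [one_div, inv_mul_cancel₀ hd.ne'] at this
  set v : Fin n → ℝ := x - y with hv
  apply ciSup_le
  intro i
  rw [div_le_iff₀ (hη i)]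
  set f : (Fin n → ℝ) → ℝ := fun z => z i - α * F z i with hfdef
  have hfeq : ((x - α • F x) - (y - α • F y)) i = f x - f y := by
    simp only [Pi.sub_apply, Pi.smul_apply, smul_eq_mul, f]
  rw [hfeq]
  -- derivative bound at any point z
  have key_bound : ∀ z : Fin n → ℝ, |v i - α * fderiv ℝ F z v i| ≤ (1 - α * c) * W * η i := by
    intro z
    have hD : fderiv ℝ F z v i = ∑ j, v j * jac F z i j :=
      clm_apply_eq_sum (fderiv ℝ F z) v i
    rw [hD, ← Finset.add_sum_erase _ (fun j => v j * jac F z i j) (Finset.mem_univ i)]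
    set S := ∑ j ∈ Finset.univ.erase i, v j * jac F z i j with hS
    have e1 : v i - α * (v i * jac F z i i + S)
        = (1 - α * jac F z i i) * v i + (-α) * S := by ring
    rw [e1]
    obtain ⟨hcA, hrow⟩ := row_bound η hη F c hmono z i
    have hAd : jac F z i i ≤ d := hdiag z i
    have h1a : α * jac F z i i ≤ 1 :=
      le_trans (mul_le_mul_of_nonneg_left hAd hα0.le) hαd
    have hSle : |S| ≤ W * ((jac F z i i - c) * η i) := by
      calc |S| ≤ ∑ j ∈ Finset.univ.erase i, |v j * jac F z i j| :=
            Finset.abs_sum_le_sum_abs _ _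
        _ ≤ ∑ j ∈ Finset.univ.erase i, (η j * W) * |jac F z i j| := by
            refine Finset.sum_le_sum fun j _ => ?_
            rw [abs_mul]
            exact mul_le_mul_of_nonneg_right (hb j) (abs_nonneg _)
        _ = W * ∑ j ∈ Finset.univ.erase i, η j * |jac F z i j| := by
            rw [Finset.mul_sum]; refine Finset.sum_congr rfl fun j _ => by ring
        _ ≤ W * ((jac F z i i - c) * η i) := mul_le_mul_of_nonneg_left hrow hW
    calc |(1 - α * jac F z i i) * v i + (-α) * S|
        ≤ |(1 - α * jac F z i i) * v i| + |(-α) * S| := abs_add_le _ _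
      _ = (1 - α * jac F z i i) * |v i| + α * |S| := by
          rw [abs_mul, abs_mul, abs_neg, abs_of_pos hα0, abs_of_nonneg (by linarith)]
      _ ≤ (1 - α * jac F z i i) * (η i * W) + α * (W * ((jac F z i i - c) * η i)) := by
          gcongr
          exact hb i
      _ = (1 - α * c) * W * η i := by ring
  -- mean value along the segment
  set g : ℝ → (Fin n → ℝ) := fun t => y + t • v with hgdef
  have hgd : ∀ t : ℝ, HasDerivAt g v t := by
    intro t
    have h := ((hasDerivAt_id t).smul_const v).const_add y
    rw [one_smul] at h
    exact h
  have hder : ∀ t ∈ Set.Icc (0:ℝ) 1,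
      HasDerivWithinAt (fun t => f (g t)) (v i - α * fderiv ℝ F (g t) v i) (Set.Icc 0 1) t := by
    intro t _
    have h1 : HasFDerivAt (fun z : Fin n → ℝ => z i) (prj i) (g t) :=
      (prj i).hasFDerivAt
    have h2 : HasFDerivAt (fun z => F z i)
        ((prj i).comp (fderiv ℝ F (g t))) (g t) :=
      (prj i).hasFDerivAt.comp (g t) (hFd (g t)).hasFDerivAt
    have h3 : HasFDerivAt f
        (prj i - α • ((prj i).comp (fderiv ℝ F (g t))))
        (g t) := h1.sub (h2.const_mul α)
    have h5 := h3.comp_hasDerivAt t (hgd t)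
    have happ : (prj i - α • ((prj i).comp (fderiv ℝ F (g t)))) v
        = v i - α * fderiv ℝ F (g t) v i := by
      simp [ContinuousLinearMap.sub_apply, ContinuousLinearMap.smul_apply,
        ContinuousLinearMap.comp_apply, prj_apply, smul_eq_mul]
    rw [happ] at h5
    exact h5.hasDerivWithinAt
  have hmv := Convex.norm_image_sub_le_of_norm_hasDerivWithin_le hder
    (fun t _ => by simpa [Real.norm_eq_abs] using key_bound (g t)) (convex_Icc 0 1)
    (Set.left_mem_Icc.2 zero_le_one) (Set.right_mem_Icc.2 zero_le_one)
  have hg1 : g 1 = x := by simp [hgdef, hv]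
  have hg0 : g 0 = y := by simp [hgdef]
  rw [hg1, hg0] at hmv
  simpa [Real.norm_eq_abs] using hmv

lemma norm_le_wNorm {n : ℕ} (η : Fin n → ℝ) (hη : ∀ i, 0 < η i) (u : Fin n → ℝ) :
    ‖u‖ ≤ (∑ j, η j) * wNorm η u := by
  have hM : 0 ≤ ∑ j, η j := Finset.sum_nonneg fun j _ => (hη j).le
  have hW := wNorm_nonneg η u hη
  rw [pi_norm_le_iff_of_nonneg (mul_nonneg hM hW)]
  intro i
  rw [Real.norm_eq_abs]
  have h1 : |u i| ≤ wNorm η u * η i := (div_le_iff₀ (hη i)).mp (le_wNorm η u i)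
  have h2 : η i ≤ ∑ j, η j := Finset.single_le_sum (fun j _ => (hη j).le) (Finset.mem_univ i)
  nlinarith

lemma exists_zero {n : ℕ} (η : Fin n → ℝ) (hη : ∀ i, 0 < η i)
    (F : (Fin n → ℝ) → (Fin n → ℝ)) (hF : ContDiff ℝ 1 F)
    (c : ℝ) (hc : 0 < c) (hmono : ∀ x, logNorm η (-(jac F x)) ≤ -c)
    (d : ℝ) (hd : 0 < d) (hdiag : ∀ x i, jac F x i i ≤ d) :
    ∃ p, F p = 0 := by
  rcases Nat.eq_zero_or_pos n with hn | hn
  · exact ⟨0, funext fun i => absurd i.isLt (by omega)⟩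
  haveI : Nonempty (Fin n) := ⟨⟨0, hn⟩⟩
  have hα0 : (0:ℝ) < 1/d := by positivity
  have hcd : c ≤ d :=
    le_trans (row_bound η hη F c hmono 0 ⟨0, hn⟩).1 (hdiag 0 ⟨0, hn⟩)
  set L : ℝ := 1 - (1/d) * c with hLdef
  have hαd : (1/d) * d = 1 := by field_simp
  have hL0 : 0 ≤ L := by
    have : (1/d) * c ≤ (1/d) * d := mul_le_mul_of_nonneg_left hcd hα0.le
    rw [hαd] at this; rw [hLdef]; linarith
  have hL1 : L < 1 := by
    have : 0 < (1/d) * c := mul_pos hα0 hc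
    simp only [hLdef]; linarith
  set G : (Fin n → ℝ) → (Fin n → ℝ) := fun z => z - (1/d) • F z with hGdef
  have hkey : ∀ a b, wNorm η (G a - G b) ≤ L * wNorm η (a - b) := fun a b =>
    key_contract η hη F hF c hmono d hd hdiag (1/d) hα0 le_rfl a b
  set u : ℕ → (Fin n → ℝ) := fun k => G^[k] 0 with hudef
  have hu : ∀ k, u (k+1) = G (u k) := fun k => Function.iterate_succ_apply' G k 0
  have hgeo : ∀ k, wNorm η (u k - u (k+1)) ≤ L^k * wNorm η (u 0 - u 1) := by
    intro k
    induction k with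
    | zero => simp
    | succ k ih =>
      calc wNorm η (u (k+1) - u (k+2)) ≤ L * wNorm η (u k - u (k+1)) := by
            rw [hu (k+1), hu k]; exact hkey _ _
        _ ≤ L * (L^k * wNorm η (u 0 - u 1)) := mul_le_mul_of_nonneg_left ih hL0
        _ = L^(k+1) * wNorm η (u 0 - u 1) := by ring
  set M : ℝ := ∑ j, η j with hMdef
  have hM : 0 ≤ M := Finset.sum_nonneg fun j _ => (hη j).le
  have hcauchy : CauchySeq u := by
    apply cauchySeq_of_le_geometric L (M * wNorm η (u 0 - u 1)) hL1
    intro k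
    rw [dist_eq_norm]
    calc ‖u k - u (k+1)‖ ≤ M * wNorm η (u k - u (k+1)) := norm_le_wNorm η hη _
      _ ≤ M * (L^k * wNorm η (u 0 - u 1)) := mul_le_mul_of_nonneg_left (hgeo k) hM
      _ = M * wNorm η (u 0 - u 1) * L^k := by ring
  obtain ⟨p, hp⟩ := cauchySeq_tendsto_of_complete hcauchy
  have hGc : Continuous G := continuous_id.sub ((hF.continuous).const_smul (1/d))
  have h1 : Tendsto (fun k => u (k+1)) atTop (nhds p) := hp.comp (tendsto_add_atTop_nat 1)
  have h2 : Tendsto (fun k => G (u k)) atTop (nhds (G p)) := (hGc.tendsto p).comp hp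
  have hGp : G p = p := by
    refine tendsto_nhds_unique h2 ?_
    have : (fun k => G (u k)) = fun k => u (k+1) := funext fun k => (hu k).symm
    rw [this]; exact h1
  have hsm : (1/d) • F p = 0 := by
    have : p - (1/d) • F p = p := hGp
    exact sub_eq_self.mp this
  refine ⟨p, ?_⟩
  rcases smul_eq_zero.mp hsm with h | h
  · exact absurd h (by positivity)
  · exact h

lemma zeros_eq {n : ℕ} (η : Fin n → ℝ) (hη : ∀ i, 0 < η i)
    (F : (Fin n → ℝ) → (Fin n → ℝ)) (hF : ContDiff ℝ 1 F)
    (c : ℝ) (hc : 0 < c) (hmono : ∀ x, logNorm η (-(jac F x)) ≤ -c)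
    (d : ℝ) (hd : 0 < d) (hdiag : ∀ x i, jac F x i i ≤ d)
    (a b : Fin n → ℝ) (ha : F a = 0) (hb : F b = 0) : a = b := by
  rcases Nat.eq_zero_or_pos n with hn | hn
  · exact funext fun i => absurd i.isLt (by omega)
  haveI : Nonempty (Fin n) := ⟨⟨0, hn⟩⟩
  have hα0 : (0:ℝ) < 1/d := by positivity
  have h := key_contract η hη F hF c hmono d hd hdiag (1/d) hα0 le_rfl a b
  rw [ha, hb, smul_zero, sub_zero, sub_zero] at h
  have hW := wNorm_nonneg η (a - b) hη
  have hpos : 0 < (1/d) * c := by positivity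
  have hW0 : wNorm η (a - b) ≤ 0 := by nlinarith
  funext i
  have h1 : |(a - b) i| / η i ≤ 0 := le_trans (le_wNorm η (a - b) i) hW0
  have h2 : |(a - b) i| ≤ 0 := by
    have := (div_le_iff₀ (hη i)).mp h1
    simpa using this
  have h3 : (a - b) i = 0 := abs_nonpos_iff.mp h2
  have : a i - b i = 0 := h3
  linarith


/-- Forward step method: strongly monotone case. -/
theorem stmt_7 {n : ℕ} (η : Fin n → ℝ) (hη : ∀ i, 0 < η i)
    (F : (Fin n → ℝ) → (Fin n → ℝ)) (hF : ContDiff ℝ 1 F)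
    (c : ℝ) (hc : 0 < c) (hmono : ∀ x, logNorm η (-(jac F x)) ≤ -c)
    (d : ℝ) (hd : 0 < d) (hdiag : ∀ x i, jac F x i i ≤ d) :
    (∃! xs : Fin n → ℝ, F xs = 0) ∧
    (∀ xs : Fin n → ℝ, F xs = 0 →
      ∀ α ∈ Set.Ioc (0 : ℝ) (1 / d), ∀ x : ℕ → (Fin n → ℝ),
        (∀ k, x (k + 1) = x k - α • F (x k)) →
        (∀ k, wNorm η (x (k + 1) - xs) ≤ (1 - α * c) * wNorm η (x k - xs)) ∧
        Tendsto x atTop (nhds xs)) := by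
  constructor
  · obtain ⟨p, hp⟩ := exists_zero η hη F hF c hc hmono d hd hdiag
    exact ⟨p, hp, fun q hq => zeros_eq η hη F hF c hc hmono d hd hdiag q p hq hp⟩
  · intro xs hxs α hα x hx
    obtain ⟨hα0, hα1⟩ := hα
    have hcon : ∀ k, wNorm η (x (k + 1) - xs) ≤ (1 - α * c) * wNorm η (x k - xs) := by
      intro k
      have h := key_contract η hη F hF c hmono d hd hdiag α hα0 hα1 (x k) xs
      rw [hxs, smul_zero, sub_zero, ← hx k] at h
      exact h
    refine ⟨hcon, ?_⟩
    rcases Nat.eq_zero_or_pos n with hn | hn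
    · have : x = fun _ => xs := funext fun k => funext fun i => absurd i.isLt (by omega)
      rw [this]
      exact tendsto_const_nhds
    haveI : Nonempty (Fin n) := ⟨⟨0, hn⟩⟩
    set L : ℝ := 1 - α * c with hLdef
    have hcd : c ≤ d :=
      le_trans (row_bound η hη F c hmono 0 ⟨0, hn⟩).1 (hdiag 0 ⟨0, hn⟩)
    have hαd : α * d ≤ 1 := by
      have := mul_le_mul_of_nonneg_right hα1 hd.le
      rwa [one_div, inv_mul_cancel₀ hd.ne'] at this
    have hL0 : 0 ≤ L := by
      have h1 : α * c ≤ α * d := mul_le_mul_of_nonneg_left hcd hα0.le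
      rw [hLdef]; linarith
    have hL1 : L < 1 := by
      have : 0 < α * c := mul_pos hα0 hc
      rw [hLdef]; linarith
    have hgeo : ∀ k, wNorm η (x k - xs) ≤ L ^ k * wNorm η (x 0 - xs) := by
      intro k
      induction k with
      | zero => simp
      | succ k ih =>
        calc wNorm η (x (k + 1) - xs) ≤ L * wNorm η (x k - xs) := hcon k
          _ ≤ L * (L ^ k * wNorm η (x 0 - xs)) := mul_le_mul_of_nonneg_left ih hL0
          _ = L ^ (k + 1) * wNorm η (x 0 - xs) := by ring
    set M : ℝ := ∑ j, η j with hMdef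
    have hM : 0 ≤ M := Finset.sum_nonneg fun j _ => (hη j).le
    rw [tendsto_iff_norm_sub_tendsto_zero]
    apply squeeze_zero (fun k => norm_nonneg _)
      (g := fun k => M * wNorm η (x 0 - xs) * L ^ k)
    · intro k
      calc ‖x k - xs‖ ≤ M * wNorm η (x k - xs) := norm_le_wNorm η hη _
        _ ≤ M * (L ^ k * wNorm η (x 0 - xs)) := mul_le_mul_of_nonneg_left (hgeo k) hM
        _ = M * wNorm η (x 0 - xs) * L ^ k := by ring
    · have := (tendsto_pow_atTop_nhds_zero_of_lt_one hL0 hL1).const_mul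
        (M * wNorm η (x 0 - xs))
      simpa using this
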